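/- The matrix square root is operator concave: for positive semi-definite real d×d matrices A, B and λ ∈ [0,1], √(λA + (1−λ)B) ⪰ λ√A + (1−λ)√B in the Loewner order. -/

import Mathlib

open scoped Classical
open scoped Matrix

/-- The PSD square root of a matrix (zero if the matrix is not PSD). -/
noncomputable def psdSqrt {d : ℕ} (M : Matrix (Fin d) (Fin d) ℝ) :
    Matrix (Fin d) (Fin d) ℝ :=
  if h : M.PosSemidef then
    (h.1.eigenvectorUnitary : Matrix (Fin d) (Fin d) ℝ) *
      Matrix.diagonal ((↑) ∘ (√·) ∘ h.1.eigenvalues) *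
      (star h.1.eigenvectorUnitary : Matrix (Fin d) (Fin d) ℝ)
  else 0

noncomputable def Matrix.PosSemidef.sqrt {d : ℕ} {M : Matrix (Fin d) (Fin d) ℝ}
    (h : M.PosSemidef) : Matrix (Fin d) (Fin d) ℝ :=
  (h.1.eigenvectorUnitary : Matrix (Fin d) (Fin d) ℝ) *
    Matrix.diagonal ((↑) ∘ (√·) ∘ h.1.eigenvalues) *
    (star h.1.eigenvectorUnitary : Matrix (Fin d) (Fin d) ℝ)

lemma Matrix.PosSemidef.posSemidef_sqrt {d : ℕ} {M : Matrix (Fin d) (Fin d) ℝ}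
    (h : M.PosSemidef) : h.sqrt.PosSemidef := by
  have hD : (Matrix.diagonal (((↑) ∘ (√·) ∘ h.1.eigenvalues : Fin d → ℝ))).PosSemidef :=
    Matrix.PosSemidef.diagonal (fun i => by simp [Real.sqrt_nonneg])
  have := hD.mul_mul_conjTranspose_same (h.1.eigenvectorUnitary : Matrix (Fin d) (Fin d) ℝ)
  unfold Matrix.PosSemidef.sqrt
  simpa [Matrix.star_eq_conjTranspose] using this

lemma Matrix.PosSemidef.sqrt_mul_self {d : ℕ} {M : Matrix (Fin d) (Fin d) ℝ}
    (h : M.PosSemidef) : h.sqrt * h.sqrt = M := by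
  set U : Matrix (Fin d) (Fin d) ℝ := (h.1.eigenvectorUnitary : Matrix (Fin d) (Fin d) ℝ)
  have hU : (star h.1.eigenvectorUnitary : Matrix (Fin d) (Fin d) ℝ) * U = 1 :=
    Unitary.coe_star_mul_self _
  unfold Matrix.PosSemidef.sqrt
  conv_rhs => rw [h.1.spectral_theorem, Unitary.conjStarAlgAut_apply]
  calc _ = U * (Matrix.diagonal ((↑) ∘ (√·) ∘ h.1.eigenvalues) *
      ((star h.1.eigenvectorUnitary : Matrix (Fin d) (Fin d) ℝ) * U) *
      Matrix.diagonal ((↑) ∘ (√·) ∘ h.1.eigenvalues)) *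
      (star h.1.eigenvectorUnitary : Matrix (Fin d) (Fin d) ℝ) := by
        simp only [U, Matrix.mul_assoc]
    _ = _ := by
        rw [hU, Matrix.mul_one, Matrix.diagonal_mul_diagonal]
        congr 3
        funext i
        simp [Real.mul_self_sqrt (h.eigenvalues_nonneg i)]

lemma psd_smul {d : ℕ} {c : ℝ} (hc : 0 ≤ c) {M : Matrix (Fin d) (Fin d) ℝ}
    (hM : M.PosSemidef) : (c • M).PosSemidef := by
  refine Matrix.PosSemidef.of_dotProduct_mulVec_nonneg ?_ fun x => ?_
  · unfold Matrix.IsHermitian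
    rw [Matrix.conjTranspose_smul, hM.1]
    simp
  · rw [Matrix.smul_mulVec, dotProduct_smul]
    exact mul_nonneg hc (hM.dotProduct_mulVec_nonneg x)

/-- Operator monotonicity half: if `S` is PSD and `S ^ 2 ⪯ C` then `S ⪯ √C`. -/
lemma sqrt_loewner {d : ℕ} {C S : Matrix (Fin d) (Fin d) ℝ}
    (hC : C.PosSemidef) (hS : S.PosSemidef) (h : (C - S * S).PosSemidef) :
    (hC.sqrt - S).PosSemidef := by
  set T := hC.sqrt with hTdef
  have hT : T.PosSemidef := hC.posSemidef_sqrt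
  have hD : (T - S).IsHermitian := hT.1.sub hS.1
  refine hD.posSemidef_iff_eigenvalues_nonneg.mpr fun i => (?_ : 0 ≤ hD.eigenvalues i)
  by_contra hneg
  push_neg at hneg
  set μ := hD.eigenvalues i with hμdef
  set v : Fin d → ℝ := ⇑(hD.eigenvectorBasis i) with hvdef
  have hv : (T - S) *ᵥ v = μ • v := hD.mulVec_eigenvectorBasis i
  have hvne : v ≠ 0 := by
    intro h0
    have := hD.eigenvectorBasis.toBasis.ne_zero i
    apply this
    ext j
    exact congrFun h0 j
  have hstar : star v = v := by simp
  have ha : 0 ≤ v ⬝ᵥ (T *ᵥ v) := by have := hT.dotProduct_mulVec_nonneg v; rwa [hstar] at this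
  have hb : 0 ≤ v ⬝ᵥ (S *ᵥ v) := by have := hS.dotProduct_mulVec_nonneg v; rwa [hstar] at this
  have hkey : 0 ≤ v ⬝ᵥ ((C - S * S) *ᵥ v) := by have := h.dotProduct_mulVec_nonneg v; rwa [hstar] at this
  have hCeq : C - S * S = T * (T - S) + (T - S) * S := by
    rw [mul_sub, sub_mul, hC.sqrt_mul_self]
    abel
  have hvecMul : v ᵥ* (T - S) = μ • v := by
    rw [← Matrix.mulVec_transpose]
    rw [show (T - S)ᵀ = T - S from by
      have h' := hD; rwa [Matrix.IsHermitian, Matrix.conjTranspose_eq_transpose_of_trivial] at h']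
    exact hv
  have h1 : v ⬝ᵥ (T * (T - S)) *ᵥ v = μ * (v ⬝ᵥ T *ᵥ v) := by
    rw [← Matrix.mulVec_mulVec, hv, Matrix.mulVec_smul, dotProduct_smul, smul_eq_mul]
  have h2 : v ⬝ᵥ ((T - S) * S) *ᵥ v = μ * (v ⬝ᵥ S *ᵥ v) := by
    rw [← Matrix.mulVec_mulVec, Matrix.dotProduct_mulVec, hvecMul, smul_dotProduct,
      smul_eq_mul]
  have hcalc : v ⬝ᵥ ((C - S * S) *ᵥ v) = μ * (v ⬝ᵥ (T *ᵥ v) + v ⬝ᵥ (S *ᵥ v)) := by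
    rw [hCeq, Matrix.add_mulVec, dotProduct_add, h1, h2, mul_add]
  rw [hcalc] at hkey
  have hab : v ⬝ᵥ (T *ᵥ v) + v ⬝ᵥ (S *ᵥ v) ≤ 0 := by nlinarith
  have haz : v ⬝ᵥ (T *ᵥ v) = 0 := by linarith
  have hbz : v ⬝ᵥ (S *ᵥ v) = 0 := by linarith
  have hTv : T *ᵥ v = 0 := (hT.dotProduct_mulVec_zero_iff v).mp (by rwa [hstar])
  have hSv : S *ᵥ v = 0 := (hS.dotProduct_mulVec_zero_iff v).mp (by rwa [hstar])
  have : μ • v = 0 := by rw [← hv, Matrix.sub_mulVec, hTv, hSv, sub_zero]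
  rcases smul_eq_zero.mp this with h0 | h0
  · exact hneg.ne h0
  · exact hvne h0

lemma psdSqrt_eq {d : ℕ} {M : Matrix (Fin d) (Fin d) ℝ} (hM : M.PosSemidef) :
    psdSqrt M = hM.sqrt := dif_pos hM

lemma alg_id {d : ℕ} (P Q : Matrix (Fin d) (Fin d) ℝ) (l : ℝ) :
    l • (P * P) + (1 - l) • (Q * Q) - (l • P + (1 - l) • Q) * (l • P + (1 - l) • Q)
      = (l * (1 - l)) • ((P - Q) * (P - Q)) := by
  simp only [add_mul, mul_add, sub_mul, mul_sub, Matrix.smul_mul, Matrix.mul_smul, smul_smul,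
    smul_sub, smul_add]
  module

/-- Operator concavity of the matrix square root:
`√(λA + (1−λ)B) ⪰ λ√A + (1−λ)√B` for PSD `A, B` and `λ ∈ [0,1]`. -/
theorem stmt17 {d : ℕ} (A B : Matrix (Fin d) (Fin d) ℝ)
    (hA : A.PosSemidef) (hB : B.PosSemidef) (l : ℝ) (hl : l ∈ Set.Icc (0 : ℝ) 1) :
    (psdSqrt (l • A + (1 - l) • B) - (l • psdSqrt A + (1 - l) • psdSqrt B)).PosSemidef := by
  obtain ⟨hl0, hl1⟩ := hl
  have hl1' : (0 : ℝ) ≤ 1 - l := by linarith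
  have hC : (l • A + (1 - l) • B).PosSemidef := (psd_smul hl0 hA).add (psd_smul hl1' hB)
  have hS : (l • hA.sqrt + (1 - l) • hB.sqrt).PosSemidef :=
    (psd_smul hl0 hA.posSemidef_sqrt).add (psd_smul hl1' hB.posSemidef_sqrt)
  rw [psdSqrt_eq hA, psdSqrt_eq hB, psdSqrt_eq hC]
  apply sqrt_loewner hC hS
  have key := alg_id hA.sqrt hB.sqrt l
  rw [hA.sqrt_mul_self, hB.sqrt_mul_self] at key
  rw [key]
  have hE : (hA.sqrt - hB.sqrt)ᴴ = hA.sqrt - hB.sqrt := by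
    rw [Matrix.conjTranspose_sub, hA.posSemidef_sqrt.1, hB.posSemidef_sqrt.1]
  have hpsd := Matrix.posSemidef_conjTranspose_mul_self (hA.sqrt - hB.sqrt)
  rw [hE] at hpsd
  exact psd_smul (mul_nonneg hl0 hl1') hpsd
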